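/- The set E₂ is empty: for all real numbers a and b, the system (x⁴ + a·y² − y, y⁴ + b·x² − x) has at most 4 nondegenerate roots (x,y) with x > 0 and y > 0. -/

import Mathlib

noncomputable section

open Set

/-- First polynomial of the Haas system with parameters `(a, b, d)`. -/
def h₁ (a : ℝ) (d : ℕ) (x y : ℝ) : ℝ := x ^ (2 * d) + a * y ^ d - y

/-- Second polynomial of the Haas system with parameters `(a, b, d)`. -/
def h₂ (b : ℝ) (d : ℕ) (x y : ℝ) : ℝ := y ^ (2 * d) + b * x ^ d - x

/-- The Jacobian matrix of the Haas system `(h₁, h₂)` at `(x, y)`. -/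
def haasJac (a b : ℝ) (d : ℕ) (x y : ℝ) : Matrix (Fin 2) (Fin 2) ℝ :=
  !![2 * (d : ℝ) * x ^ (2 * d - 1), a * (d : ℝ) * y ^ (d - 1) - 1;
     b * (d : ℝ) * x ^ (d - 1) - 1, 2 * (d : ℝ) * y ^ (2 * d - 1)]

/-- `p` is a nondegenerate positive root of the Haas system `H_{(a,b,d)}`. -/
def IsNondegPosRoot (a b : ℝ) (d : ℕ) (p : ℝ × ℝ) : Prop :=
  0 < p.1 ∧ 0 < p.2 ∧ h₁ a d p.1 p.2 = 0 ∧ h₂ b d p.1 p.2 = 0 ∧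
    IsUnit (haasJac a b d p.1 p.2)

/-- `E d` is the set of parameter pairs `(a, b)` for which the Haas system
`H_{(a,b,d)}` has at least 5 nondegenerate positive roots. -/
def E (d : ℕ) : Set (ℝ × ℝ) :=
  {q | 5 ≤ {p : ℝ × ℝ | IsNondegPosRoot q.1 q.2 d p}.encard}

-- the cubic has at most one real root
private lemma cubic_no_two_roots {u v : ℝ} (huv : u < v)
    (hu : 168*u^3 - 428*u^2 + 366*u - 105 = 0)
    (hv : 168*v^3 - 428*v^2 + 366*v - 105 = 0) : False := by
  have hB : (v - u) * (168*(u^2+u*v+v^2) - 428*(u+v) + 366) = 0 := by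
    linear_combination hv - hu
  have hpos : 168*(u^2+u*v+v^2) - 428*(u+v) + 366 > 0 := by
    nlinarith [sq_nonneg (63*(u+v) - 107), sq_nonneg (u - v)]
  nlinarith [sub_pos.mpr huv]

private lemma exists_four_lt (X : Set ℝ) (h : 3 < X.encard) :
    ∃ x₁ x₂ x₃ x₄, x₁ ∈ X ∧ x₂ ∈ X ∧ x₃ ∈ X ∧ x₄ ∈ X ∧ x₁ < x₂ ∧ x₂ < x₃ ∧ x₃ < x₄ := by
  have h4 : (4:ℕ∞) ≤ X.encard := by
    have := Order.add_one_le_of_lt h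
    exact le_trans (le_of_eq (by norm_num)) this
  obtain ⟨t, hts, ht4⟩ := Set.exists_subset_encard_eq h4
  have htf : t.Finite := Set.finite_of_encard_eq_coe (by exact_mod_cast ht4)
  have hcard : htf.toFinset.card = 4 := by
    have := htf.encard_eq_coe_toFinset_card
    rw [this] at ht4
    exact_mod_cast ht4
  set f := htf.toFinset with hf
  have hne1 : f.Nonempty := Finset.card_pos.mp (by omega)
  set x₁ := f.min' hne1 with hx1
  have hm1 : x₁ ∈ f := f.min'_mem hne1
  set f₂ := f.erase x₁ with hf2
  have hc2 : f₂.card = 3 := by rw [hf2, Finset.card_erase_of_mem hm1, hcard]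
  have hne2 : f₂.Nonempty := Finset.card_pos.mp (by omega)
  set x₂ := f₂.min' hne2 with hx2
  have hm2 : x₂ ∈ f₂ := f₂.min'_mem hne2
  set f₃ := f₂.erase x₂ with hf3
  have hc3 : f₃.card = 2 := by rw [hf3, Finset.card_erase_of_mem hm2, hc2]
  have hne3 : f₃.Nonempty := Finset.card_pos.mp (by omega)
  set x₃ := f₃.min' hne3 with hx3
  have hm3 : x₃ ∈ f₃ := f₃.min'_mem hne3
  set f₄ := f₃.erase x₃ with hf4
  have hc4 : f₄.card = 1 := by rw [hf4, Finset.card_erase_of_mem hm3, hc3]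
  have hne4 : f₄.Nonempty := Finset.card_pos.mp (by omega)
  set x₄ := f₄.min' hne4 with hx4
  have hm4 : x₄ ∈ f₄ := f₄.min'_mem hne4
  have m2f : x₂ ∈ f := Finset.mem_of_mem_erase hm2
  have m3f2 : x₃ ∈ f₂ := Finset.mem_of_mem_erase hm3
  have m3f : x₃ ∈ f := Finset.mem_of_mem_erase m3f2
  have m4f3 : x₄ ∈ f₃ := Finset.mem_of_mem_erase hm4
  have m4f : x₄ ∈ f := Finset.mem_of_mem_erase (Finset.mem_of_mem_erase m4f3)
  have h12 : x₁ < x₂ :=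
    lt_of_le_of_ne (f.min'_le _ m2f) (Ne.symm (Finset.ne_of_mem_erase hm2))
  have h23 : x₂ < x₃ :=
    lt_of_le_of_ne (f₂.min'_le _ m3f2) (Ne.symm (Finset.ne_of_mem_erase hm3))
  have h34 : x₃ < x₄ :=
    lt_of_le_of_ne (f₃.min'_le _ m4f3) (Ne.symm (Finset.ne_of_mem_erase hm4))
  have memX : ∀ z ∈ f, z ∈ X := fun z hz => hts (by simpa [hf, Set.Finite.mem_toFinset] using hz)
  exact ⟨x₁, x₂, x₃, x₄, memX _ hm1, memX _ m2f, memX _ m3f, memX _ m4f, h12, h23, h34⟩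

private noncomputable def sf (b x : ℝ) : ℝ := x - b * x ^ 2

private noncomputable def Gf (a b : ℝ) (x : ℝ) : ℝ :=
  x ^ 4 * sf b x ^ (-(1/2) : ℝ) + a - sf b x ^ (-(1/4) : ℝ)

private noncomputable def Gd (b x : ℝ) : ℝ :=
  x ^ 4 * (7 - 6 * b * x) / 2 * sf b x ^ (-(3/2) : ℝ)
    + (1 - 2 * b * x) / 4 * sf b x ^ (-(5/4) : ℝ)

private lemma sf_hasDeriv (b x : ℝ) : HasDerivAt (sf b) (1 - 2 * b * x) x := by
  have h : HasDerivAt (fun x : ℝ => x - b * x ^ 2) (1 - b * (2 * x ^ 1)) x :=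
    (hasDerivAt_id x).sub ((hasDerivAt_pow 2 x).const_mul b)
  refine h.congr_deriv ?_
  ring

private lemma Gf_hasDeriv (a b x : ℝ) (hx : 0 < x) (hs : 0 < sf b x) :
    HasDerivAt (Gf a b) (Gd b x) x := by
  have hsne : sf b x ≠ 0 := hs.ne'
  have h12 : HasDerivAt (fun x => sf b x ^ (-(1/2) : ℝ))
      ((1 - 2*b*x) * (-(1/2)) * sf b x ^ ((-(1/2)) - 1 : ℝ)) x :=
    (sf_hasDeriv b x).rpow_const (Or.inl hsne)
  have h14 : HasDerivAt (fun x => sf b x ^ (-(1/4) : ℝ))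
      ((1 - 2*b*x) * (-(1/4)) * sf b x ^ ((-(1/4)) - 1 : ℝ)) x :=
    (sf_hasDeriv b x).rpow_const (Or.inl hsne)
  have hx4 : HasDerivAt (fun x : ℝ => x ^ 4) (4 * x ^ 3) x := by
    simpa using hasDerivAt_pow 4 x
  have hmain : HasDerivAt (Gf a b)
      ((4 * x ^ 3 * sf b x ^ (-(1/2) : ℝ)
        + x ^ 4 * ((1 - 2*b*x) * (-(1/2)) * sf b x ^ ((-(1/2)) - 1 : ℝ)))
        - (1 - 2*b*x) * (-(1/4)) * sf b x ^ ((-(1/4)) - 1 : ℝ)) x :=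
    ((hx4.mul h12).add_const a).sub h14
  convert hmain using 1
  have e32 : sf b x ^ (-(1/2) : ℝ) = sf b x * sf b x ^ (-(3/2) : ℝ) := by
    rw [show (-(1/2) : ℝ) = 1 + -(3/2) by norm_num, Real.rpow_add hs, Real.rpow_one]
  have ee1 : ((-(1/2)) - 1 : ℝ) = (-(3/2) : ℝ) := by norm_num
  have ee2 : ((-(1/4)) - 1 : ℝ) = (-(5/4) : ℝ) := by norm_num
  rw [Gd, e32, ee1, ee2]
  show _ = 4*x^3*((x - b*x^2) * sf b x ^ (-(3/2):ℝ)) + _ - _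
  simp only [sf]
  ring

private noncomputable def g1 (b x : ℝ) : ℝ :=
  2 * x ^ 4 * (7 - 6 * b * x) + (1 - 2 * b * x) * sf b x ^ ((1/4) : ℝ)

private lemma g1_of_Gd (b x : ℝ) (hs : 0 < sf b x) (hGd : Gd b x = 0) : g1 b x = 0 := by
  have e1 : sf b x ^ ((3/2) : ℝ) * sf b x ^ (-(3/2) : ℝ) = 1 := by
    rw [← Real.rpow_add hs]; norm_num
  have e2 : sf b x ^ ((3/2) : ℝ) * sf b x ^ (-(5/4) : ℝ) = sf b x ^ ((1/4) : ℝ) := by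
    rw [← Real.rpow_add hs]; norm_num
  have expand : g1 b x =
      4 * sf b x ^ ((3/2) : ℝ) * Gd b x
        - 2 * x ^ 4 * (7 - 6*b*x) * (sf b x ^ ((3/2) : ℝ) * sf b x ^ (-(3/2) : ℝ) - 1)
        - (1 - 2*b*x) * (sf b x ^ ((3/2) : ℝ) * sf b x ^ (-(5/4) : ℝ) - sf b x ^ ((1/4) : ℝ)) := by
    rw [g1, Gd]; ring
  rw [expand, hGd, e1, e2]; ring

private lemma window_of_g1 {b x : ℝ} (hb : 0 < b) (hx : 0 < x) (hbx : b * x < 1)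
    (hs : 0 < sf b x) (hg : g1 b x = 0) : 1 - 2 * b * x < 0 := by
  by_contra h
  push_neg at h
  have h7 : 0 < 7 - 6 * b * x := by nlinarith
  have h1 : 0 < 2 * x ^ 4 * (7 - 6 * b * x) := by positivity
  have h2 : 0 ≤ (1 - 2 * b * x) * sf b x ^ ((1/4) : ℝ) :=
    mul_nonneg h (Real.rpow_pos_of_pos hs _).le
  have := hg
  rw [g1] at this
  linarith

private noncomputable def Hf (b x : ℝ) : ℝ :=
  2 * x ^ 4 * (7 - 6 * b * x) * (2 * b * x - 1)⁻¹ * sf b x ^ (-(1/4) : ℝ) - 1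

private lemma Hf_zero (b x : ℝ) (hs : 0 < sf b x) (hD : 0 < 2 * b * x - 1)
    (hg : g1 b x = 0) : Hf b x = 0 := by
  have hN : 2 * x ^ 4 * (7 - 6 * b * x) = (2 * b * x - 1) * sf b x ^ ((1/4) : ℝ) := by
    rw [g1] at hg; linarith
  have e : sf b x ^ ((1/4) : ℝ) * sf b x ^ (-(1/4) : ℝ) = 1 := by
    rw [← Real.rpow_add hs]; norm_num
  have hinv : (2*b*x - 1) * (2*b*x - 1)⁻¹ = 1 := mul_inv_cancel₀ hD.ne'
  rw [Hf, hN]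
  linear_combination (sf b x ^ ((1/4):ℝ) * sf b x ^ (-(1/4):ℝ)) * hinv + e

private noncomputable def Wf (b x : ℝ) : ℝ :=
  (2 * (4*x^3) * (7 - 6*b*x) + 2 * x^4 * (-(6*b))) * (2*b*x - 1)⁻¹
    + 2 * x ^ 4 * (7 - 6*b*x) * (-(2*b) / (2*b*x - 1) ^ 2)
    + 2 * x ^ 4 * (7 - 6*b*x) * (2*b*x - 1)⁻¹ * ((1 - 2*b*x) * (-(1/4)) * (sf b x)⁻¹)

private lemma Hf_hasDeriv (b x : ℝ) (hs : 0 < sf b x) (hD : 2*b*x - 1 ≠ 0) :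
    HasDerivAt (Hf b) (sf b x ^ (-(1/4) : ℝ) * Wf b x) x := by
  have hsne : sf b x ≠ 0 := hs.ne'
  have hN : HasDerivAt (fun x : ℝ => 2 * x ^ 4 * (7 - 6*b*x))
      (2 * (4*x^3) * (7 - 6*b*x) + 2 * x^4 * (-(6*b))) x := by
    have h1 : HasDerivAt (fun x : ℝ => 2 * x ^ 4) (2 * (4*x^3)) x := by
      simpa using (hasDerivAt_pow 4 x).const_mul 2
    have h2 : HasDerivAt (fun x : ℝ => 7 - 6*b*x) (-(6*b)) x := by
      simpa using ((hasDerivAt_id x).const_mul (6*b)).const_sub 7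
    exact h1.mul h2
  have hDlin : HasDerivAt (fun x : ℝ => 2*b*x - 1) (2*b) x := by
    simpa using ((hasDerivAt_id x).const_mul (2*b)).sub_const 1
  have hDinv : HasDerivAt (fun x : ℝ => (2*b*x - 1)⁻¹) (-(2*b) / (2*b*x - 1) ^ 2) x :=
    hDlin.inv hD
  have h14 : HasDerivAt (fun x => sf b x ^ (-(1/4) : ℝ))
      ((1 - 2*b*x) * (-(1/4)) * sf b x ^ ((-(1/4)) - 1 : ℝ)) x :=
    (sf_hasDeriv b x).rpow_const (Or.inl hsne)
  have hmain := (((hN.mul hDinv)).mul h14).sub_const 1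
  refine hmain.congr_deriv ?_
  have e5 : sf b x ^ ((-(1/4)) - 1 : ℝ) = sf b x ^ (-(1/4) : ℝ) * (sf b x)⁻¹ := by
    rw [show ((-(1/4)) - 1 : ℝ) = (-(1/4)) + (-1) by norm_num, Real.rpow_add hs,
      Real.rpow_neg_one]
  rw [Wf, e5]
  simp only [Pi.mul_apply]
  ring

private lemma cubic_of_W (b x : ℝ) (hx : 0 < x) (hs : 0 < sf b x)
    (hD : 2*b*x - 1 ≠ 0) (hW : Wf b x = 0) :
    168*(b*x)^3 - 428*(b*x)^2 + 366*(b*x) - 105 = 0 := by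
  have hkey : (2*b*x - 1) ^ 2 * sf b x * Wf b x
      = x ^ 4 * (168*(b*x)^3 - 428*(b*x)^2 + 366*(b*x) - 105) / 2 := by
    have hsne : x - b*x^2 ≠ 0 := by simpa [sf] using hs.ne'
    have hx0 : x ≠ 0 := hx.ne'
    have h1bx : 1 - b * x ≠ 0 := by intro h; apply hsne; linear_combination x * h
    simp only [Wf, sf]
    field_simp [hD, hsne, hx0, h1bx]
    ring
  rw [hW, mul_zero] at hkey
  have hx4 : x ^ 4 ≠ 0 := by positivity
  have := hkey.symm
  field_simp at this
  rw [mul_zero] at this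
  rcases mul_eq_zero.mp this with h | h
  · exact absurd h hx4
  · linear_combination h


private lemma root_props {a b : ℝ} {p : ℝ × ℝ} (hp : IsNondegPosRoot a b 2 p) :
    0 < p.1 ∧ 0 < sf b p.1 ∧ sf b p.1 = p.2 ^ 4 ∧ Gf a b p.1 = 0 := by
  obtain ⟨hx, hy, he1, he2, -⟩ := hp
  set x := p.1; set y := p.2
  have he1' : x ^ 4 + a * y ^ 2 - y = 0 := by simpa [h₁] using he1
  have he2' : y ^ 4 + b * x ^ 2 - x = 0 := by simpa [h₂] using he2
  have hsy : sf b x = y ^ 4 := by simp only [sf]; linarith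
  have hs : 0 < sf b x := by rw [hsy]; positivity
  refine ⟨hx, hs, hsy, ?_⟩
  have r2 : sf b x ^ (-(1/2) : ℝ) = (y ^ 2)⁻¹ := by
    rw [hsy, show y ^ 4 = (y^2)^2 by ring, ← Real.rpow_natCast (y^2) 2,
      ← Real.rpow_mul (by positivity)]
    norm_num [Real.rpow_neg_one]
  have r4 : sf b x ^ (-(1/4) : ℝ) = y⁻¹ := by
    rw [hsy, ← Real.rpow_natCast y 4, ← Real.rpow_mul hy.le]
    norm_num [Real.rpow_neg_one]
  rw [Gf, r2, r4]
  have hrw : x ^ 4 * (y ^ 2)⁻¹ + a - y⁻¹ = (x ^ 4 + a * y ^ 2 - y) / y ^ 2 := by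
    field_simp
  rw [hrw, he1', zero_div]

private lemma key (a b : ℝ) : {p : ℝ × ℝ | IsNondegPosRoot a b 2 p}.encard ≤ 3 := by
  set S := {p : ℝ × ℝ | IsNondegPosRoot a b 2 p} with hS
  by_contra hc
  push_neg at hc
  have hinj : Set.InjOn Prod.fst S := by
    intro p hp q hq he
    obtain ⟨hxp, hsp, hyp, -⟩ := root_props hp
    obtain ⟨hxq, hsq, hyq, -⟩ := root_props hq
    have hy4 : p.2 ^ 4 = q.2 ^ 4 := by rw [← hyp, ← hyq, he]
    have hyppos : 0 < p.2 := hp.2.1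
    have hyqpos : 0 < q.2 := hq.2.1
    have hfac : (p.2 - q.2) * ((p.2 + q.2) * (p.2 ^ 2 + q.2 ^ 2)) = 0 := by
      linear_combination hy4
    have hpos : 0 < (p.2 + q.2) * (p.2 ^ 2 + q.2 ^ 2) := by positivity
    have h2 : p.2 = q.2 := by
      rcases mul_eq_zero.mp hfac with h | h
      · linarith [sub_eq_zero.mp h]
      · exact absurd h hpos.ne'
    exact Prod.ext he h2
  have hX : 3 < (Prod.fst '' S).encard := by rw [hinj.encard_image]; exact hc
  obtain ⟨x₁, x₂, x₃, x₄, hm₁, hm₂, hm₃, hm₄, h12, h23, h34⟩ := exists_four_lt _ hX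
  have hprop : ∀ x ∈ Prod.fst '' S, 0 < x ∧ 0 < sf b x ∧ Gf a b x = 0 := by
    rintro x ⟨p, hp, rfl⟩
    obtain ⟨h1, h2, -, h4⟩ := root_props hp
    exact ⟨h1, h2, h4⟩
  obtain ⟨hx₁pos, hs₁, hG₁⟩ := hprop _ hm₁
  obtain ⟨hx₂pos, hs₂, hG₂⟩ := hprop _ hm₂
  obtain ⟨hx₃pos, hs₃, hG₃⟩ := hprop _ hm₃
  obtain ⟨hx₄pos, hs₄, hG₄⟩ := hprop _ hm₄
  rcases le_or_gt b 0 with hb | hb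
  · -- b ≤ 0 : sf > 0 everywhere on (0,∞), G' > 0, so G has at most one zero
    have hsx : ∀ x : ℝ, 0 < x → 0 < sf b x := by
      intro x hx; simp only [sf]; nlinarith
    have hder : ∀ x ∈ Ioo x₁ x₂, HasDerivAt (Gf a b) (Gd b x) x := by
      intro x hx
      have hxpos : 0 < x := lt_trans hx₁pos hx.1
      exact Gf_hasDeriv a b x hxpos (hsx x hxpos)
    have hcont : ContinuousOn (Gf a b) (Icc x₁ x₂) := by
      intro x hx
      have hxpos : 0 < x := lt_of_lt_of_le hx₁pos hx.1
      exact (Gf_hasDeriv a b x hxpos (hsx x hxpos)).continuousAt.continuousWithinAt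
    obtain ⟨ξ, hξ, hGd0⟩ :=
      exists_hasDerivAt_eq_zero h12 hcont (by rw [hG₁, hG₂]) hder
    have hξpos : 0 < ξ := lt_trans hx₁pos hξ.1
    have hsξ : 0 < sf b ξ := hsx ξ hξpos
    have h7 : 0 < 7 - 6 * b * ξ := by nlinarith
    have h1m : 0 < 1 - 2 * b * ξ := by nlinarith
    have hA : 0 < ξ ^ 4 * (7 - 6*b*ξ) / 2 * sf b ξ ^ (-(3/2) : ℝ) :=
      mul_pos (by positivity) (Real.rpow_pos_of_pos hsξ _)
    have hB : 0 < (1 - 2*b*ξ) / 4 * sf b ξ ^ (-(5/4) : ℝ) :=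
      mul_pos (by positivity) (Real.rpow_pos_of_pos hsξ _)
    rw [Gd] at hGd0
    linarith
  · -- b > 0
    have hbx : ∀ x ∈ Prod.fst '' S, b * x < 1 := by
      rintro x hx
      obtain ⟨hxpos, hsx, -⟩ := hprop _ hx
      simp only [sf] at hsx; nlinarith
    have hbx₄ : b * x₄ < 1 := hbx _ hm₄
    have hsf : ∀ x : ℝ, 0 < x → x ≤ x₄ → 0 < sf b x := by
      intro x hx hle
      have : b * x < 1 := by nlinarith
      simp only [sf]; nlinarith
    -- three Rolle points for G
    have roll : ∀ u v : ℝ, u < v → 0 < u → v ≤ x₄ → Gf a b u = 0 → Gf a b v = 0 →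
        ∃ ξ ∈ Ioo u v, Gd b ξ = 0 := by
      intro u v huv hu hv hGu hGv
      have hder : ∀ x ∈ Ioo u v, HasDerivAt (Gf a b) (Gd b x) x := by
        intro x hx
        have hxpos : 0 < x := lt_trans hu hx.1
        exact Gf_hasDeriv a b x hxpos (hsf x hxpos (le_trans hx.2.le hv))
      have hcont : ContinuousOn (Gf a b) (Icc u v) := by
        intro x hx
        have hxpos : 0 < x := lt_of_lt_of_le hu hx.1
        exact (Gf_hasDeriv a b x hxpos
          (hsf x hxpos (le_trans hx.2 hv))).continuousAt.continuousWithinAt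
      exact exists_hasDerivAt_eq_zero huv hcont (by rw [hGu, hGv]) hder
    obtain ⟨ξ₁, hξ₁, hGd₁⟩ := roll x₁ x₂ h12 hx₁pos (by linarith) hG₁ hG₂
    obtain ⟨ξ₂, hξ₂, hGd₂⟩ := roll x₂ x₃ h23 hx₂pos (by linarith) hG₂ hG₃
    obtain ⟨ξ₃, hξ₃, hGd₃⟩ := roll x₃ x₄ h34 hx₃pos le_rfl hG₃ hG₄
    have hq : ∀ ξ : ℝ, ξ ∈ Ioo x₁ x₄ → Gd b ξ = 0 →
        0 < 2 * b * ξ - 1 ∧ Hf b ξ = 0 := by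
      intro ξ hξ hGd
      have hξpos : 0 < ξ := lt_trans hx₁pos hξ.1
      have hsξ : 0 < sf b ξ := hsf ξ hξpos hξ.2.le
      have hbξ : b * ξ < 1 := by
        have := hsξ; simp only [sf] at this; nlinarith
      have hg := g1_of_Gd b ξ hsξ hGd
      have hw := window_of_g1 hb hξpos hbξ hsξ hg
      have hD : 0 < 2 * b * ξ - 1 := by linarith
      exact ⟨hD, Hf_zero b ξ hsξ hD hg⟩
    obtain ⟨hD₁, hH₁⟩ := hq ξ₁ ⟨hξ₁.1, lt_trans hξ₁.2 (lt_trans h23 h34)⟩ hGd₁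
    obtain ⟨hD₂, hH₂⟩ := hq ξ₂ ⟨lt_trans h12 hξ₂.1, lt_trans hξ₂.2 h34⟩ hGd₂
    obtain ⟨hD₃, hH₃⟩ := hq ξ₃ ⟨lt_trans h12 (lt_trans h23 hξ₃.1), hξ₃.2⟩ hGd₃
    -- Rolle for H on [ξ₁,ξ₂] and [ξ₂,ξ₃]
    have rollH : ∀ u v : ℝ, u < v → 0 < 2*b*u - 1 → v < x₄ → Hf b u = 0 → Hf b v = 0 →
        ∃ η ∈ Ioo u v, 168*(b*η)^3 - 428*(b*η)^2 + 366*(b*η) - 105 = 0 := by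
      intro u v huv hDu hvx hHu hHv
      have hupos : 0 < u := by nlinarith
      have hfacts : ∀ x : ℝ, u ≤ x → x ≤ v → 0 < x ∧ 0 < sf b x ∧ 2*b*x - 1 ≠ 0 := by
        intro x hux hxv
        have hxpos : 0 < x := lt_of_lt_of_le hupos hux
        have hD : 0 < 2*b*x - 1 := by nlinarith
        exact ⟨hxpos, hsf x hxpos (by linarith), hD.ne'⟩
      have hder : ∀ x ∈ Ioo u v,
          HasDerivAt (Hf b) (sf b x ^ (-(1/4) : ℝ) * Wf b x) x := by
        intro x hx
        obtain ⟨h1, h2, h3⟩ := hfacts x hx.1.le hx.2.le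
        exact Hf_hasDeriv b x h2 h3
      have hcont : ContinuousOn (Hf b) (Icc u v) := by
        intro x hx
        obtain ⟨h1, h2, h3⟩ := hfacts x hx.1 hx.2
        exact (Hf_hasDeriv b x h2 h3).continuousAt.continuousWithinAt
      obtain ⟨η, hη, hW0⟩ := exists_hasDerivAt_eq_zero huv hcont (by rw [hHu, hHv]) hder
      obtain ⟨h1, h2, h3⟩ := hfacts η hη.1.le hη.2.le
      have hWη : Wf b η = 0 := by
        rcases mul_eq_zero.mp hW0 with h | h
        · exact absurd h (Real.rpow_pos_of_pos h2 _).ne'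
        · exact h
      exact ⟨η, hη, cubic_of_W b η h1 h2 h3 hWη⟩
    obtain ⟨η₁, hη₁, hcub₁⟩ := rollH ξ₁ ξ₂ (lt_trans hξ₁.2 hξ₂.1) hD₁
      (lt_trans hξ₂.2 h34) hH₁ hH₂
    obtain ⟨η₂, hη₂, hcub₂⟩ := rollH ξ₂ ξ₃ (lt_trans hξ₂.2 hξ₃.1) hD₂ hξ₃.2 hH₂ hH₃
    have hηlt : b * η₁ < b * η₂ :=
      mul_lt_mul_of_pos_left (lt_trans hη₁.2 hη₂.1) hb
    exact cubic_no_two_roots hηlt hcub₁ hcub₂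

/-- `E₂` is empty: for all real `a`, `b`, the Haas system `H_{(a,b,2)}` has at
most 4 nondegenerate positive roots. -/
theorem E_two_empty :
    E 2 = ∅ ∧
      ∀ a b : ℝ, {p : ℝ × ℝ | IsNondegPosRoot a b 2 p}.encard ≤ 4 := by
  constructor
  · ext q
    simp only [E, Set.mem_setOf_eq, Set.mem_empty_iff_false, iff_false]
    intro h5
    have h3 := key q.1 q.2
    have : (5 : ℕ∞) ≤ 3 := le_trans h5 h3
    norm_num at this
  · intro a b
    exact le_trans (key a b) (by norm_num)
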